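/- Every finite indecomposable cycle set with abelian permutation group is multipermutational, i.e., iterated retraction eventually yields a singleton. -/

import Mathlib

/-- A cycle set: a set with bijective left multiplications `σ x`
satisfying `(x·y)·(x·z) = (y·x)·(y·z)`. -/
structure CycleSet (X : Type*) where
  σ : X → Equiv.Perm X
  cycl : ∀ x y z : X, σ (σ x y) (σ x z) = σ (σ y x) (σ y z)

namespace CycleSet

variable {X Y : Type*}

/-- The permutation group generated by the left multiplications. -/
def permGroup (S : CycleSet X) : Subgroup (Equiv.Perm X) :=
  Subgroup.closure (Set.range S.σ)

/-- Indecomposability: the permutation group acts transitively. -/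
def Transitive (S : CycleSet X) : Prop :=
  ∀ x y : X, ∃ g ∈ S.permGroup, g x = y

/-- The permutation group is abelian. -/
def AbelianPerm (S : CycleSet X) : Prop :=
  ∀ g ∈ S.permGroup, ∀ h ∈ S.permGroup, g * h = h * g

/-- `rel S n x y` holds iff `x` and `y` become equal in the `n`-th iterated
retraction `σ^n(X)`. -/
def rel (S : CycleSet X) : ℕ → X → X → Prop
  | 0 => Eq
  | n + 1 => fun x y => ∀ z, S.rel n (S.σ x z) (S.σ y z)

/-- The cardinality `|σ^n(X)|` of the `n`-th iterated retraction. -/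
noncomputable def retCard (S : CycleSet X) (n : ℕ) : ℕ :=
  Nat.card (Quot (S.rel n))

/-- `X` is multipermutational of level `m`: `m` is minimal with `|σ^m(X)| = 1`. -/
def MultipermLevel (S : CycleSet X) (m : ℕ) : Prop :=
  (∀ x y, S.rel m x y) ∧ ∀ k < m, ¬ (∀ x y, S.rel k x y)

/-- Isomorphism of cycle sets. -/
def Isomorphic (S : CycleSet X) (T : CycleSet Y) : Prop :=
  ∃ F : X → Y, Function.Bijective F ∧ ∀ x y, F (S.σ x y) = T.σ (F x) (F y)

end CycleSet

namespace CycleSet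

variable {X : Type*}

lemma perm_cycl (S : CycleSet X) (x y : X) :
    S.σ (S.σ x y) * S.σ x = S.σ (S.σ y x) * S.σ y :=
  Equiv.ext fun z => S.cycl x y z

lemma sigma_mem (S : CycleSet X) (x : X) : S.σ x ∈ S.permGroup :=
  Subgroup.subset_closure ⟨x, rfl⟩

lemma rel_one_def (S : CycleSet X) (x y : X) :
    S.rel 1 x y ↔ ∀ z, S.σ x z = S.σ y z := Iff.rfl

lemma rel_succ_def (S : CycleSet X) (n : ℕ) (x y : X) :
    S.rel (n + 1) x y ↔ ∀ z, S.rel n (S.σ x z) (S.σ y z) := Iff.rfl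

lemma rel_one_iff (S : CycleSet X) {x y : X} : S.rel 1 x y ↔ S.σ x = S.σ y := by
  rw [rel_one_def]
  exact ⟨fun h => Equiv.ext h, fun h z => by rw [h]⟩

/-- Core lemma: if `σ` is injective, the cycle set is a singleton. -/
lemma subsingleton_of_injective [Finite X] (S : CycleSet X)
    (hab : S.AbelianPerm) (htr : S.Transitive)
    (hinj : Function.Injective S.σ) : ∀ x y : X, x = y := by
  cases isEmpty_or_nonempty X with
  | inl h => exact fun x => (h.false x).elim
  | inr h =>
    obtain ⟨x₀⟩ := h
    classical
    haveI := Fintype.ofFinite X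
    haveI : Fintype S.permGroup := Fintype.ofFinite _
    -- the evaluation map permGroup → X is injective (free action)
    have hev : Function.Injective (fun g : S.permGroup => (g : Equiv.Perm X) x₀) := by
      intro g g' hgg
      simp only at hgg
      ext w
      obtain ⟨k, hk, hkx⟩ := htr x₀ w
      have key : ∀ u : S.permGroup, (u : Equiv.Perm X) w = k ((u : Equiv.Perm X) x₀) := by
        intro u
        have h := hab _ u.2 _ hk
        calc (u : Equiv.Perm X) w = (u : Equiv.Perm X) (k x₀) := by rw [hkx]
          _ = ((u : Equiv.Perm X) * k) x₀ := rfl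
          _ = (k * (u : Equiv.Perm X)) x₀ := by rw [h]
          _ = k ((u : Equiv.Perm X) x₀) := rfl
      rw [key g, key g', hgg]
    -- the map f : X → permGroup, y ↦ σ (σ y x₀) * σ y is injective
    set f : X → S.permGroup := fun y =>
      ⟨S.σ (S.σ y x₀) * S.σ y, mul_mem (S.sigma_mem _) (S.sigma_mem _)⟩ with hf
    have hfinj : Function.Injective f := by
      intro y y' hyy
      have h1 : S.σ (S.σ y x₀) * S.σ y = S.σ (S.σ y' x₀) * S.σ y' :=
        congrArg Subtype.val hyy
      rw [← perm_cycl S x₀ y, ← perm_cycl S x₀ y'] at h1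
      have h2 := mul_right_cancel h1
      exact (S.σ x₀).injective (hinj h2)
    -- cardinalities agree, so f is surjective
    have hcard : Fintype.card X = Fintype.card S.permGroup :=
      le_antisymm (Fintype.card_le_of_injective f hfinj)
        (Fintype.card_le_of_injective _ hev)
    have hfsurj : Function.Surjective f :=
      ((Fintype.bijective_iff_injective_and_card f).mpr ⟨hfinj, hcard⟩).2
    obtain ⟨y₀, hy₀⟩ := hfsurj ⟨S.σ x₀, S.sigma_mem x₀⟩
    have h3 : S.σ (S.σ y₀ x₀) * S.σ y₀ = S.σ x₀ := congrArg Subtype.val hy₀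
    rw [← perm_cycl] at h3
    have h4 : S.σ (S.σ x₀ y₀) = 1 := by
      have := h3.trans (one_mul (S.σ x₀)).symm
      exact mul_right_cancel this
    set z := S.σ x₀ y₀ with hz
    -- every σ y fixes z
    have hfix : ∀ y, S.σ y z = z := by
      intro y
      have h5 : ∀ w, S.σ y w = S.σ (S.σ y z) (S.σ y w) := by
        intro w
        have := S.cycl z y w
        rw [h4] at this
        simpa using this
      have h6 : S.σ (S.σ y z) = 1 := by
        ext v
        have := h5 ((S.σ y)⁻¹ v)
        simp only [Equiv.Perm.coe_inv, Equiv.apply_symm_apply] at this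
        simpa using this.symm
      exact hinj (h6.trans h4.symm)
    -- hence the whole group fixes z, so by transitivity X = {z}
    have hGfix : ∀ g ∈ S.permGroup, (g : Equiv.Perm X) z = z := by
      intro g hg
      have hle : S.permGroup ≤ MulAction.stabilizer (Equiv.Perm X) z := by
        rw [permGroup, Subgroup.closure_le]
        rintro _ ⟨y, rfl⟩
        exact hfix y
      exact hle hg
    have hall : ∀ w : X, w = z := by
      intro w
      obtain ⟨g, hg, hgz⟩ := htr z w
      rw [← hgz]
      exact (hGfix g hg).symm ▸ (hGfix g hg)
    intro x y
    rw [hall x, hall y]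

section Retraction

variable (S : CycleSet X)

/-- The setoid of the first retraction. -/
def st : Setoid X :=
  ⟨S.rel 1, ⟨fun _ _ => rfl, fun h z => (h z).symm, fun h1 h2 z => (h1 z).trans (h2 z)⟩⟩

lemma st_congr {x x' y y' : X} (hx : S.rel 1 x x') (hy : S.rel 1 y y') :
    S.rel 1 (S.σ x y) (S.σ x' y') := by
  rw [rel_one_iff] at hx hy ⊢
  have hxy : S.σ x y = S.σ x' y := by rw [hx]
  rw [hxy]
  have h1 : S.σ (S.σ x' y) * S.σ x' = S.σ (S.σ x' y') * S.σ x' := by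
    rw [perm_cycl S x' y, perm_cycl S x' y']
    have h2 : S.σ y x' = S.σ y' x' := by rw [hy]
    rw [h2, hy]
  exact mul_right_cancel h1

/-- Multiplication on the retraction quotient. -/
def qmul : Quotient S.st → Quotient S.st → Quotient S.st :=
  Quotient.map₂ (fun x y => S.σ x y) (fun _ _ hx _ _ hy => S.st_congr hx hy)

lemma qmul_mk (x y : X) :
    S.qmul (Quotient.mk S.st x) (Quotient.mk S.st y) = Quotient.mk S.st (S.σ x y) := rfl

lemma qmul_bijective [Finite X] (xq : Quotient S.st) : Function.Bijective (S.qmul xq) := by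
  apply Function.Surjective.bijective_of_finite
  intro wq
  obtain ⟨x, rfl⟩ := Quotient.exists_rep xq
  obtain ⟨w, rfl⟩ := Quotient.exists_rep wq
  refine ⟨Quotient.mk S.st ((S.σ x)⁻¹ w), ?_⟩
  rw [qmul_mk, Equiv.Perm.coe_inv, Equiv.apply_symm_apply]

/-- The retraction cycle set. -/
noncomputable def retr [Finite X] : CycleSet (Quotient S.st) where
  σ := fun xq => Equiv.ofBijective (S.qmul xq) (S.qmul_bijective xq)
  cycl := by
    intro xq yq zq
    obtain ⟨x, rfl⟩ := Quotient.exists_rep xq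
    obtain ⟨y, rfl⟩ := Quotient.exists_rep yq
    obtain ⟨z, rfl⟩ := Quotient.exists_rep zq
    show S.qmul (S.qmul (Quotient.mk S.st x) (Quotient.mk S.st y))
        (S.qmul (Quotient.mk S.st x) (Quotient.mk S.st z)) =
      S.qmul (S.qmul (Quotient.mk S.st y) (Quotient.mk S.st x))
        (S.qmul (Quotient.mk S.st y) (Quotient.mk S.st z))
    simp only [qmul_mk]
    exact congrArg (Quotient.mk S.st) (S.cycl x y z)

variable [Finite X]

lemma retr_sigma_mk (x z : X) :
    S.retr.σ (Quotient.mk S.st x) (Quotient.mk S.st z) = Quotient.mk S.st (S.σ x z) := rfl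

/-- Commuting generators give a commutative closure. -/
lemma closure_comm {G : Type*} [Group G] {s : Set G}
    (hs : ∀ a ∈ s, ∀ b ∈ s, a * b = b * a) :
    ∀ g ∈ Subgroup.closure s, ∀ h ∈ Subgroup.closure s, g * h = h * g := by
  have step : ∀ b ∈ Subgroup.closure s, ∀ a ∈ s, a * b = b * a := by
    intro b hb
    induction hb using Subgroup.closure_induction with
    | mem x hx => exact fun a ha => hs a ha x hx
    | one => intro a _; rw [mul_one, one_mul]
    | mul x y _ _ ihx ihy =>
      intro a ha
      rw [← mul_assoc, ihx a ha, mul_assoc, ihy a ha, mul_assoc]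
    | inv x hx ihx =>
      intro a ha
      have := ihx a ha
      calc a * x⁻¹ = x⁻¹ * (x * a) * x⁻¹ := by group
        _ = x⁻¹ * (a * x) * x⁻¹ := by rw [this]
        _ = x⁻¹ * a := by group
  intro g hg
  induction hg using Subgroup.closure_induction with
  | mem x hx => exact fun h hh => step h hh x hx
  | one => intro h _; rw [mul_one, one_mul]
  | mul x y _ _ ihx ihy =>
    intro h hh
    rw [mul_assoc, ihy h hh, ← mul_assoc, ihx h hh, mul_assoc]
  | inv x hx ihx =>
    intro h hh
    have := ihx h hh
    calc x⁻¹ * h = x⁻¹ * (h * x) * x⁻¹ := by group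
      _ = x⁻¹ * (x * h) * x⁻¹ := by rw [this]
      _ = h * x⁻¹ := by group

lemma retr_abelian (hab : S.AbelianPerm) : S.retr.AbelianPerm := by
  apply closure_comm
  rintro _ ⟨xq, rfl⟩ _ ⟨yq, rfl⟩
  obtain ⟨x, rfl⟩ := Quotient.exists_rep xq
  obtain ⟨y, rfl⟩ := Quotient.exists_rep yq
  ext zq
  obtain ⟨z, rfl⟩ := Quotient.exists_rep zq
  simp only [Equiv.Perm.mul_apply]
  rw [retr_sigma_mk, retr_sigma_mk, retr_sigma_mk, retr_sigma_mk]
  have : S.σ x (S.σ y z) = S.σ y (S.σ x z) := by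
    have h := hab (S.σ x) (S.sigma_mem x) (S.σ y) (S.sigma_mem y)
    calc S.σ x (S.σ y z) = (S.σ x * S.σ y) z := rfl
      _ = (S.σ y * S.σ x) z := by rw [h]
      _ = S.σ y (S.σ x z) := rfl
  rw [this]

lemma retr_lift_mem :
    ∀ g ∈ S.permGroup, ∃ gq ∈ S.retr.permGroup,
      ∀ z : X, gq (Quotient.mk S.st z) = Quotient.mk S.st (g z) := by
  intro g hg
  induction hg using Subgroup.closure_induction with
  | mem x hx =>
    obtain ⟨x, rfl⟩ := hx
    exact ⟨S.retr.σ (Quotient.mk S.st x), S.retr.sigma_mem _, fun z => rfl⟩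
  | one => exact ⟨1, one_mem _, fun z => rfl⟩
  | mul a b _ _ iha ihb =>
    obtain ⟨aq, haq, haq2⟩ := iha
    obtain ⟨bq, hbq, hbq2⟩ := ihb
    refine ⟨aq * bq, mul_mem haq hbq, fun z => ?_⟩
    simp only [Equiv.Perm.mul_apply]
    rw [hbq2, haq2]
  | inv a _ iha =>
    obtain ⟨aq, haq, haq2⟩ := iha
    refine ⟨aq⁻¹, inv_mem haq, fun z => ?_⟩
    have : aq (Quotient.mk S.st (a⁻¹ z)) = Quotient.mk S.st z := by
      rw [haq2, Equiv.Perm.coe_inv, Equiv.apply_symm_apply]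
    calc aq⁻¹ (Quotient.mk S.st z) = aq⁻¹ (aq (Quotient.mk S.st (a⁻¹ z))) := by rw [this]
      _ = Quotient.mk S.st (a⁻¹ z) := Equiv.symm_apply_apply _ _

lemma retr_transitive (htr : S.Transitive) : S.retr.Transitive := by
  intro xq yq
  obtain ⟨x, rfl⟩ := Quotient.exists_rep xq
  obtain ⟨y, rfl⟩ := Quotient.exists_rep yq
  obtain ⟨g, hg, hgx⟩ := htr x y
  obtain ⟨gq, hgq, hgq2⟩ := S.retr_lift_mem g hg
  exact ⟨gq, hgq, by rw [hgq2, hgx]⟩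

lemma retr_rel (n : ℕ) : ∀ x y : X,
    S.retr.rel n (Quotient.mk S.st x) (Quotient.mk S.st y) ↔ S.rel (n + 1) x y := by
  induction n with
  | zero =>
    intro x y
    show Quotient.mk S.st x = Quotient.mk S.st y ↔ _
    exact ⟨fun h => Quotient.exact h, fun h => Quotient.sound h⟩
  | succ n ih =>
    intro x y
    rw [rel_succ_def, rel_succ_def]
    constructor
    · intro h z
      have := h (Quotient.mk S.st z)
      rw [retr_sigma_mk, retr_sigma_mk] at this
      exact (ih _ _).mp this
    · intro h zq
      obtain ⟨z, rfl⟩ := Quotient.exists_rep zq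
      rw [retr_sigma_mk, retr_sigma_mk]
      exact (ih _ _).mpr (h z)

end Retraction

universe u

/-- Main induction on cardinality. -/
lemma main_aux : ∀ (n : ℕ) {X : Type u} [Finite X] (S : CycleSet X),
    S.AbelianPerm → S.Transitive → Nat.card X ≤ n → ∃ m : ℕ, ∀ x y : X, S.rel m x y := by
  intro n
  induction n with
  | zero =>
    intro X _ S _ _ hcard
    rcases isEmpty_or_nonempty X with h | h
    · exact ⟨0, fun x => (h.false x).elim⟩
    · have hp : 0 < Nat.card X := Nat.card_pos
      exact absurd hcard (by omega)
  | succ n ih =>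
    intro X _ S hab htr hcard
    by_cases hinj : Function.Injective S.σ
    · exact ⟨0, S.subsingleton_of_injective hab htr hinj⟩
    · -- σ not injective: retraction is strictly smaller
      classical
      haveI := Fintype.ofFinite X
      haveI : Fintype (Quotient S.st) := Fintype.ofFinite _
      have hne : ∃ x y : X, x ≠ y ∧ S.rel 1 x y := by
        simp only [Function.Injective, not_forall] at hinj
        obtain ⟨x, y, hxy, hne⟩ := hinj
        exact ⟨x, y, hne, (S.rel_one_iff).mpr hxy⟩
      obtain ⟨x, y, hxy, hrel⟩ := hne
      have hsurj : Function.Surjective (Quotient.mk S.st) := Quotient.exists_rep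
      have hnotinj : ¬ Function.Injective (Quotient.mk S.st) := by
        intro hI
        exact hxy (hI (Quotient.sound hrel))
      have hlt : Fintype.card (Quotient S.st) < Fintype.card X :=
        Fintype.card_lt_of_surjective_not_injective _ hsurj hnotinj
      have hcard' : Nat.card (Quotient S.st) ≤ n := by
        have h1 : Nat.card (Quotient S.st) = Fintype.card (Quotient S.st) :=
          Nat.card_eq_fintype_card
        have h2 : Nat.card X = Fintype.card X := Nat.card_eq_fintype_card
        omega
      obtain ⟨m, hm⟩ := ih S.retr (S.retr_abelian hab) (S.retr_transitive htr) hcard'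
      refine ⟨m + 1, fun a b => ?_⟩
      exact (S.retr_rel m a b).mp (hm _ _)

end CycleSet

/-- Every finite indecomposable cycle set with abelian permutation group is
multipermutational: some iterated retraction is a singleton. -/
theorem stmt1 {X : Type*} [Finite X] (S : CycleSet X)
    (hab : S.AbelianPerm) (htr : S.Transitive) :
    ∃ m : ℕ, ∀ x y : X, S.rel m x y :=
  CycleSet.main_aux (Nat.card X) S hab htr le_rfl
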